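/- Marginal conformal coverage: let (X₁,Y₁),…,(X_m,Y_m),(X,Y) be i.i.d., let s be a score function such that the scores s(Xᵢ,Yᵢ), s(X,Y) are i.i.d. with atomless distribution, and let q̂_α be the ⌈(m+1)(1−α)⌉-th smallest of s(X₁,Y₁),…,s(X_m,Y_m). Then 1 − α ≤ P[s(X,Y) ≤ q̂_α] ≤ 1 − α + 1/(m+1), where the probability is over all m+1 samples. -/

import Mathlib

open MeasureTheory ProbabilityTheory
open scoped ENNReal

/-- `orderStat m v k` is the `k`-th smallest (1-indexed) of the values `v 0, …, v (m-1)`. -/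
noncomputable def orderStat (m : ℕ) (v : Fin m → ℝ) (k : ℕ) : ℝ :=
  ((Multiset.ofList (List.ofFn v)).sort (· ≤ ·)).getD (k - 1) 0

/-- The rank of coordinate `t` in the tuple `z`: the number of coordinates strictly below it. -/
noncomputable def rnk {n : ℕ} (z : Fin n → ℝ) (t : Fin n) : ℕ :=
  (Finset.univ.filter (fun i => z i < z t)).card

lemma rnk_lt_rnk {n : ℕ} {z : Fin n → ℝ} {t₁ t₂ : Fin n} (h : z t₁ < z t₂) :
    rnk z t₁ < rnk z t₂ := by
  apply Finset.card_lt_card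
  constructor
  · intro i hi
    simp only [Finset.mem_filter, Finset.mem_univ, true_and] at *
    exact hi.trans h
  · intro hsub
    have := hsub (by simp [h] : t₁ ∈ Finset.univ.filter (fun i => z i < z t₂))
    simp at this

lemma rnk_injective {n : ℕ} {z : Fin n → ℝ} (hz : Function.Injective z) :
    Function.Injective (rnk z) := by
  intro t₁ t₂ h
  by_contra hne
  rcases lt_trichotomy (z t₁) (z t₂) with h1 | h1 | h1
  · exact absurd h (rnk_lt_rnk h1).ne
  · exact hne (hz h1)
  · exact absurd h.symm (rnk_lt_rnk h1).ne

lemma rnk_lt {n : ℕ} (z : Fin n → ℝ) (t : Fin n) : rnk z t < n := by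
  have hsub : (Finset.univ.filter (fun i => z i < z t)) ⊆ Finset.univ.erase t := by
    intro i hi
    simp only [Finset.mem_filter, Finset.mem_univ, true_and] at hi
    simp only [Finset.mem_erase, Finset.mem_univ, and_true]
    rintro rfl; exact lt_irrefl _ hi
  calc rnk z t ≤ (Finset.univ.erase t).card := Finset.card_le_card hsub
    _ < Finset.univ.card := Finset.card_erase_lt_of_mem (Finset.mem_univ t)
    _ = n := by simp

lemma rnk_surj {n : ℕ} {z : Fin n → ℝ} (hz : Function.Injective z) (j : ℕ) (hj : j < n) :
    ∃ t, rnk z t = j := by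
  let f : Fin n → Fin n := fun t => ⟨rnk z t, rnk_lt z t⟩
  have hf : Function.Injective f := by
    intro a b hab
    exact rnk_injective hz (congrArg Fin.val hab)
  obtain ⟨t, ht⟩ := Finite.surjective_of_injective hf ⟨j, hj⟩
  exact ⟨t, congrArg Fin.val ht⟩

lemma sorted_get_lt_iff (a : ℝ) : ∀ (L : List ℝ), L.Pairwise (· ≤ ·) →
    ∀ i (hi : i < L.length), (L.get ⟨i, hi⟩ < a ↔ i < L.countP (fun x => decide (x < a))) := by
  intro L
  induction L with
  | nil => intro _ i hi; simp at hi
  | cons x t ih =>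
    intro hs i hi
    have hst : t.Pairwise (· ≤ ·) := hs.of_cons
    by_cases hx : x < a
    · rw [List.countP_cons_of_pos (by simpa using hx)]
      cases i with
      | zero =>
        exact ⟨fun _ => Nat.succ_pos _, fun _ => hx⟩
      | succ j =>
        have hj : j < t.length := by simpa using hi
        simp only [List.get_cons_succ]
        rw [ih hst j hj]
        omega
    · have hcount : t.countP (fun x => decide (x < a)) = 0 := by
        rw [List.countP_eq_zero]
        intro b hb
        have : x ≤ b := (List.pairwise_cons.mp hs).1 b hb
        simpa using fun h => hx (lt_of_le_of_lt this h)
      rw [List.countP_cons_of_neg (by simpa using hx), hcount]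
      simp only [Nat.not_lt_zero, iff_false, not_lt]
      cases i with
      | zero => simpa using le_of_not_gt hx
      | succ j =>
        have hj : j < t.length := by simpa using hi
        have : x ≤ t.get ⟨j, hj⟩ := (List.pairwise_cons.mp hs).1 _ (t.get_mem _)
        exact le_of_not_gt fun h => hx (lt_of_le_of_lt this h)

lemma countP_ofFn {n : ℕ} (v : Fin n → ℝ) (a : ℝ) :
    (List.ofFn v).countP (fun x => decide (x < a)) =
      (Finset.univ.filter (fun i => v i < a)).card := by
  rw [List.countP_eq_length_filter, Finset.card_filter]
  induction n with
  | zero => simp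
  | succ k ih =>
    rw [List.ofFn_succ, List.filter_cons, Fin.sum_univ_succ]
    by_cases h : v 0 < a
    · simp only [h, decide_true, if_true, List.length_cons]
      rw [ih (fun i => v i.succ)]
      omega
    · simp only [h, decide_false, Bool.false_eq_true, if_false, reduceIte]
      rw [ih (fun i => v i.succ)]
      simp

lemma rnk_last_eq {m : ℕ} (z : Fin (m + 1) → ℝ) :
    rnk z (Fin.last m) =
      (Finset.univ.filter (fun i : Fin m => z i.castSucc < z (Fin.last m))).card := by
  unfold rnk
  rw [Finset.card_filter, Finset.card_filter, Fin.sum_univ_castSucc]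
  simp

lemma le_orderStat_iff {m : ℕ} (z : Fin (m + 1) → ℝ) (k : ℕ) (hk1 : 1 ≤ k) (hkm : k ≤ m) :
    (z (Fin.last m) ≤ orderStat m (fun i => z i.castSucc) k ↔ rnk z (Fin.last m) < k) := by
  set a := z (Fin.last m)
  set v : Fin m → ℝ := fun i => z i.castSucc
  set L := ((Multiset.ofList (List.ofFn v)).sort (· ≤ ·))
  have hlen : L.length = m := by
    simp [L, Multiset.length_sort]
  have hsorted : L.Pairwise (· ≤ ·) := Multiset.pairwise_sort _ _
  have hcount : L.countP (fun x => decide (x < a)) =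
      (Finset.univ.filter (fun i => v i < a)).card := by
    rw [← countP_ofFn v a]
    have he : (L : Multiset ℝ) = Multiset.ofList (List.ofFn v) := Multiset.sort_eq _ _
    have h2 := congrArg (Multiset.countP (fun x => decide (x < a))) he
    simpa using h2
  have hkL : k - 1 < L.length := by omega
  have hgetD : orderStat m v k = L.get ⟨k - 1, hkL⟩ := List.getD_eq_get (l := L) (d := 0) ⟨k - 1, hkL⟩
  rw [hgetD, ← not_lt, sorted_get_lt_iff a L hsorted (k - 1) hkL, hcount, rnk_last_eq]
  have hvz : (Finset.univ.filter (fun i => v i < a)).card =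
      (Finset.univ.filter (fun i : Fin m => z i.castSucc < z (Fin.last m))).card := rfl
  omega

lemma rnk_comp {n : ℕ} (x : Fin n → ℝ) (σ : Equiv.Perm (Fin n)) (t : Fin n) :
    rnk (x ∘ σ) t = rnk x (σ t) := by
  unfold rnk
  rw [Finset.card_filter, Finset.card_filter]
  exact Fintype.sum_equiv σ _ _ (fun i => rfl)

lemma rnk_measurable {n : ℕ} (t : Fin n) :
    Measurable (fun z : Fin n → ℝ => rnk z t) := by
  unfold rnk
  simp_rw [Finset.card_filter]
  exact Finset.measurable_sum _ fun i _ =>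
    Measurable.ite (measurableSet_lt (measurable_pi_apply i) (measurable_pi_apply t))
      measurable_const measurable_const

lemma pi_rnk_swap {n : ℕ} (ν : Measure ℝ) [IsProbabilityMeasure ν] (t u : Fin n) (j : ℕ) :
    (Measure.pi (fun _ : Fin n => ν)) {z | rnk z t = j} =
      (Measure.pi (fun _ : Fin n => ν)) {z | rnk z u = j} := by
  set σ : Equiv.Perm (Fin n) := Equiv.swap t u
  have hmp := measurePreserving_piCongrLeft (fun _ : Fin n => ν) σ
  have hB : MeasurableSet {z : Fin n → ℝ | rnk z u = j} :=
    rnk_measurable u (measurableSet_singleton j)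
  have hpr := hmp.measure_preimage hB.nullMeasurableSet
  have hpre : (MeasurableEquiv.piCongrLeft (fun _ : Fin n => ℝ) σ) ⁻¹' {z | rnk z u = j}
      = {z | rnk z t = j} := by
    ext x
    simp only [Set.mem_preimage, Set.mem_setOf_eq]
    have hx : (MeasurableEquiv.piCongrLeft (fun _ : Fin n => ℝ) σ) x = x ∘ σ.symm := by
      funext i
      have := Equiv.piCongrLeft_apply_apply (fun _ : Fin n => ℝ) σ x (σ.symm i)
      simpa [MeasurableEquiv.piCongrLeft] using this
    rw [hx, rnk_comp]
    simp [σ, Equiv.symm_swap, Equiv.swap_apply_right]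
  rw [hpre] at hpr
  exact hpr

lemma pi_rnk_eq {n : ℕ} (hn : 0 < n) (ν : Measure ℝ) [IsProbabilityMeasure ν]
    (hdiag : ∀ i j : Fin n, i ≠ j →
      (Measure.pi (fun _ : Fin n => ν)) {z | z i = z j} = 0)
    (t : Fin n) (j : ℕ) (hj : j < n) :
    (Measure.pi (fun _ : Fin n => ν)) {z | rnk z t = j} = ((n : ℝ≥0∞))⁻¹ := by
  set π := Measure.pi (fun _ : Fin n => ν) with hπ
  have hBmeas : ∀ (u : Fin n) (j : ℕ), MeasurableSet {z : Fin n → ℝ | rnk z u = j} :=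
    fun u j => rnk_measurable u (measurableSet_singleton j)
  set T : Set (Fin n → ℝ) := {z | ¬ Function.Injective z} with hT
  have hTeq : T = ⋃ (i : Fin n), ⋃ (l : Fin n), ⋃ (_ : i ≠ l), {z | z i = z l} := by
    ext z
    simp only [hT, Set.mem_setOf_eq, Set.mem_iUnion, Function.Injective]
    constructor
    · intro h
      push_neg at h
      obtain ⟨i, l, h1, h2⟩ := h
      exact ⟨i, l, h2, h1⟩
    · rintro ⟨i, l, hne, he⟩ h
      exact hne (h he)
  have hTmeas : MeasurableSet T := by
    rw [hTeq]
    refine MeasurableSet.iUnion fun i => MeasurableSet.iUnion fun l =>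
      MeasurableSet.iUnion fun _ => ?_
    exact measurableSet_eq_fun (measurable_pi_apply i) (measurable_pi_apply l)
  have hTnull : π T = 0 := by
    rw [hTeq]
    refine measure_iUnion_null fun i => measure_iUnion_null fun l =>
      measure_iUnion_null fun h => hdiag i l h
  have hcover : Tᶜ ⊆ ⋃ u ∈ Finset.univ, {z : Fin n → ℝ | rnk z u = j} := by
    intro z hz
    simp only [Set.mem_compl_iff, hT, Set.mem_setOf_eq, not_not] at hz
    obtain ⟨u, hu⟩ := rnk_surj hz j hj
    simp only [Set.mem_iUnion]
    exact ⟨u, Finset.mem_univ u, hu⟩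
  have hdisj : ((Finset.univ : Finset (Fin n)) : Set (Fin n)).Pairwise
      (Function.onFun (AEDisjoint π) (fun u => {z : Fin n → ℝ | rnk z u = j})) := by
    intro u _ w _ huw
    have hsub : {z : Fin n → ℝ | rnk z u = j} ∩ {z | rnk z w = j} ⊆ T := by
      intro z hz
      simp only [Set.mem_inter_iff, Set.mem_setOf_eq] at hz
      simp only [hT, Set.mem_setOf_eq]
      intro hinj
      exact huw (rnk_injective hinj (hz.1.trans hz.2.symm))
    exact measure_mono_null hsub hTnull
  have hsum := measure_biUnion_finset₀ hdisj
    (fun u _ => (hBmeas u j).nullMeasurableSet)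
  have hone : π (⋃ u ∈ Finset.univ, {z : Fin n → ℝ | rnk z u = j}) = 1 := by
    refine le_antisymm prob_le_one ?_
    calc (1 : ℝ≥0∞) = π Tᶜ := by
          rw [measure_compl hTmeas (measure_ne_top _ _), hTnull, measure_univ, tsub_zero]
      _ ≤ _ := measure_mono hcover
  rw [hone] at hsum
  have hconst : ∀ u : Fin n, π {z : Fin n → ℝ | rnk z u = j} = π {z | rnk z t = j} :=
    fun u => pi_rnk_swap ν u t j
  rw [Finset.sum_congr rfl (fun u _ => hconst u), Finset.sum_const, Finset.card_univ,
    Fintype.card_fin, nsmul_eq_mul] at hsum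
  have hn0 : ((n : ℝ≥0∞)) ≠ 0 := by exact_mod_cast hn.ne'
  have hnt : ((n : ℝ≥0∞)) ≠ ⊤ := ENNReal.natCast_ne_top n
  calc π {z | rnk z t = j} = ((n : ℝ≥0∞))⁻¹ * ((n : ℝ≥0∞) * π {z | rnk z t = j}) := by
        rw [← mul_assoc, ENNReal.inv_mul_cancel hn0 hnt, one_mul]
    _ = ((n : ℝ≥0∞))⁻¹ := by rw [← hsum, mul_one]

/-- Marginal conformal coverage (Theorem 1): with `m` i.i.d. calibration samples and one
test sample, all with i.i.d. atomless conformal scores, and `q̂_α` the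
`⌈(m+1)(1−α)⌉`-th smallest calibration score,
`1 − α ≤ P[s(X,Y) ≤ q̂_α] ≤ 1 − α + 1/(m+1)`. -/
theorem stmt_11 {Ω 𝒳 𝒴 : Type*} [MeasurableSpace Ω] (μ : Measure Ω) [IsProbabilityMeasure μ]
    (m : ℕ) (hm : 0 < m) (X : Fin (m + 1) → Ω → 𝒳) (Y : Fin (m + 1) → Ω → 𝒴)
    (s : 𝒳 → 𝒴 → ℝ)
    (hmeas : ∀ i, Measurable (fun ω => s (X i ω) (Y i ω)))
    (hindep : iIndepFun (fun i ω => s (X i ω) (Y i ω)) μ)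
    (hident : ∀ i, μ.map (fun ω => s (X i ω) (Y i ω)) = μ.map (fun ω => s (X 0 ω) (Y 0 ω)))
    (hatomless : ∀ x : ℝ, μ.map (fun ω => s (X 0 ω) (Y 0 ω)) {x} = 0)
    (α : ℝ) (hα : α ∈ Set.Ioo (0:ℝ) 1)
    (hidx : ⌈((m : ℝ) + 1) * (1 - α)⌉.toNat ≤ m) :
    ENNReal.ofReal (1 - α) ≤
        μ {ω | s (X (Fin.last m) ω) (Y (Fin.last m) ω) ≤
            orderStat m (fun i => s (X (Fin.castSucc i) ω) (Y (Fin.castSucc i) ω))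
              (⌈((m : ℝ) + 1) * (1 - α)⌉.toNat)} ∧
      μ {ω | s (X (Fin.last m) ω) (Y (Fin.last m) ω) ≤
            orderStat m (fun i => s (X (Fin.castSucc i) ω) (Y (Fin.castSucc i) ω))
              (⌈((m : ℝ) + 1) * (1 - α)⌉.toNat)} ≤
        ENNReal.ofReal (1 - α + 1 / ((m : ℝ) + 1)) := by
  obtain ⟨hα0, hα1⟩ := hα
  set r : ℝ := ((m : ℝ) + 1) * (1 - α) with hrdef
  set k : ℕ := ⌈r⌉.toNat with hkdef
  have hmr : (0:ℝ) < (m:ℝ) + 1 := by positivity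
  have hr0 : (0:ℝ) < r := by
    have h1 : (0:ℝ) < 1 - α := by linarith
    positivity
  have hceil1 : (1:ℤ) ≤ ⌈r⌉ := Int.ceil_pos.mpr hr0
  have hkZ : (k : ℤ) = ⌈r⌉ := Int.toNat_of_nonneg (by omega)
  have hk1 : 1 ≤ k := by omega
  have hkR : (k : ℝ) = (⌈r⌉ : ℝ) := by exact_mod_cast congrArg Int.cast hkZ
  have hkc : k ≤ m := hidx
  set f : Fin (m + 1) → Ω → ℝ := fun i ω => s (X i ω) (Y i ω) with hf
  set ν : Measure ℝ := μ.map (f 0) with hν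
  haveI : IsProbabilityMeasure ν := Measure.isProbabilityMeasure_map (hmeas 0).aemeasurable
  set π : Measure (Fin (m + 1) → ℝ) := Measure.pi (fun _ => ν) with hπ
  set Z : Ω → Fin (m + 1) → ℝ := fun ω i => f i ω with hZ
  have hZmeas : Measurable Z := measurable_pi_lambda _ hmeas
  have hmapZ : μ.map Z = π := by
    symm
    apply Measure.pi_eq
    intro sets hsets
    rw [Measure.map_apply hZmeas (MeasurableSet.univ_pi hsets)]
    have hpre : Z ⁻¹' Set.univ.pi sets = ⋂ i ∈ Finset.univ, f i ⁻¹' sets i := by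
      ext ω
      simp [Z, Set.mem_pi]
    rw [hpre, hindep.measure_inter_preimage_eq_mul Finset.univ (fun i _ => hsets i)]
    refine Finset.prod_congr rfl fun i _ => ?_
    rw [← Measure.map_apply (hmeas i) (hsets i)]
    exact congrFun (congrArg _ (hident i)) _
  have hdiagμ : ∀ i j : Fin (m + 1), i ≠ j → μ {ω | f i ω = f j ω} = 0 := by
    intro i j hij
    have h2 := (indepFun_iff_map_prod_eq_prod_map_map (hmeas i).aemeasurable
      (hmeas j).aemeasurable).mp (hindep.indepFun hij)
    have hD : MeasurableSet {p : ℝ × ℝ | p.1 = p.2} :=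
      measurableSet_eq_fun measurable_fst measurable_snd
    have hDeq : {ω | f i ω = f j ω} = (fun ω => (f i ω, f j ω)) ⁻¹' {p : ℝ × ℝ | p.1 = p.2} := rfl
    rw [hDeq, ← Measure.map_apply ((hmeas i).prodMk (hmeas j)) hD, h2, hident i, hident j,
      Measure.prod_apply hD]
    have hfib : ∀ x : ℝ, (Prod.mk x ⁻¹' {p : ℝ × ℝ | p.1 = p.2}) = {x} := by
      intro x
      ext y
      simp [eq_comm]
    simp_rw [hfib]
    simp [hatomless]
  have hdiagπ : ∀ i j : Fin (m + 1), i ≠ j → π {z | z i = z j} = 0 := by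
    intro i j hij
    have hmeasD : MeasurableSet {z : Fin (m + 1) → ℝ | z i = z j} :=
      measurableSet_eq_fun (measurable_pi_apply i) (measurable_pi_apply j)
    rw [← hmapZ, Measure.map_apply hZmeas hmeasD]
    exact hdiagμ i j hij
  have hπB : ∀ j : ℕ, j < m + 1 →
      π {z | rnk z (Fin.last m) = j} = (((m : ℝ≥0∞) + 1))⁻¹ := by
    intro j hj
    have := pi_rnk_eq (Nat.succ_pos m) ν hdiagπ (Fin.last m) j hj
    rw [hπ]
    rw [this]
    norm_cast
  -- the event
  have hSmeas : MeasurableSet {z : Fin (m + 1) → ℝ | rnk z (Fin.last m) < k} := by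
    have : {z : Fin (m + 1) → ℝ | rnk z (Fin.last m) < k} =
        (fun z : Fin (m + 1) → ℝ => rnk z (Fin.last m)) ⁻¹' (Set.Iio k) := rfl
    rw [this]
    exact rnk_measurable (Fin.last m) measurableSet_Iio
  have hset : {ω | s (X (Fin.last m) ω) (Y (Fin.last m) ω) ≤
      orderStat m (fun i => s (X (Fin.castSucc i) ω) (Y (Fin.castSucc i) ω)) k} =
      Z ⁻¹' {z | rnk z (Fin.last m) < k} := by
    ext ω
    simp only [Set.mem_setOf_eq, Set.mem_preimage]
    exact le_orderStat_iff (Z ω) k hk1 hkc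
  have hSval : π {z | rnk z (Fin.last m) < k} = (k : ℝ≥0∞) * (((m : ℝ≥0∞) + 1))⁻¹ := by
    have hun : {z : Fin (m + 1) → ℝ | rnk z (Fin.last m) < k} =
        ⋃ j ∈ Finset.range k, {z : Fin (m + 1) → ℝ | rnk z (Fin.last m) = j} := by
      ext z
      simp only [Set.mem_setOf_eq, Set.mem_iUnion, Finset.mem_range]
      exact ⟨fun h => ⟨rnk z (Fin.last m), h, rfl⟩, fun ⟨j, hj, he⟩ => he ▸ hj⟩
    have hd : ((Finset.range k : Finset ℕ) : Set ℕ).Pairwise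
        (Function.onFun Disjoint (fun j => {z : Fin (m + 1) → ℝ | rnk z (Fin.last m) = j})) := by
      intro a _ b _ hab
      simp only [Function.onFun]
      rw [Set.disjoint_left]
      intro z hz1 hz2
      simp only [Set.mem_setOf_eq] at hz1 hz2
      exact hab (hz1 ▸ hz2 ▸ rfl)
    have hbm : ∀ j ∈ Finset.range k,
        MeasurableSet {z : Fin (m + 1) → ℝ | rnk z (Fin.last m) = j} :=
      fun j _ => rnk_measurable (Fin.last m) (measurableSet_singleton j)
    rw [hun, measure_biUnion_finset hd hbm]
    rw [Finset.sum_congr rfl (fun j hj => hπB j (by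
      simp only [Finset.mem_range] at hj; omega))]
    rw [Finset.sum_const, Finset.card_range, nsmul_eq_mul]
  have hμev : μ {ω | s (X (Fin.last m) ω) (Y (Fin.last m) ω) ≤
      orderStat m (fun i => s (X (Fin.castSucc i) ω) (Y (Fin.castSucc i) ω)) k} =
      (k : ℝ≥0∞) * (((m : ℝ≥0∞) + 1))⁻¹ := by
    rw [hset, ← Measure.map_apply hZmeas hSmeas, hmapZ, hSval]
  have hval : (k : ℝ≥0∞) * (((m : ℝ≥0∞) + 1))⁻¹ = ENNReal.ofReal ((k : ℝ) / ((m : ℝ) + 1)) := by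
    rw [ENNReal.ofReal_div_of_pos hmr, ENNReal.ofReal_natCast, div_eq_mul_inv]
    congr 1
    rw [show ((m : ℝ) + 1) = ((m + 1 : ℕ) : ℝ) by push_cast; ring, ENNReal.ofReal_natCast]
    push_cast
    ring
  have hlow : 1 - α ≤ (k : ℝ) / ((m : ℝ) + 1) := by
    rw [le_div_iff₀ hmr]
    have := Int.le_ceil r
    rw [← hkR] at this
    calc (1 - α) * ((m : ℝ) + 1) = r := by rw [hrdef]; ring
      _ ≤ (k : ℝ) := this
  have hhigh : (k : ℝ) / ((m : ℝ) + 1) ≤ 1 - α + 1 / ((m : ℝ) + 1) := by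
    rw [div_le_iff₀ hmr]
    have hc := Int.ceil_lt_add_one r
    rw [← hkR] at hc
    have : (k : ℝ) ≤ r + 1 := le_of_lt hc
    calc (k : ℝ) ≤ r + 1 := this
      _ = (1 - α + 1 / ((m : ℝ) + 1)) * ((m : ℝ) + 1) := by
          rw [hrdef]; field_simp
  constructor
  · rw [hμev, hval]
    exact ENNReal.ofReal_le_ofReal hlow
  · rw [hμev, hval]
    exact ENNReal.ofReal_le_ofReal hhigh
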